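/- Suppose n ≥ 2, c > 0, u : (0,∞) → ℝ is n-times continuously differentiable and ∫₀^∞ e^{-cx} x^{k+1}|u^{(k)}(x)| dx < ∞ for k = 0,…,n. Then for every real θ > c, lim_{x→0} e^{-θx} xⁿ u^{(n-2)}(x) = 0 and lim_{x→∞} e^{-θx} xⁿ u^{(n-2)}(x) = 0. -/

import Mathlib

open MeasureTheory Real Filter

theorem stmt16 (n : ℕ) (hn : 2 ≤ n) (c : ℝ) (hc : 0 < c) (u : ℝ → ℝ)
    (hsmooth : ContDiffOn ℝ n u (Set.Ioi 0))
    (hint : ∀ k ≤ n,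
      IntegrableOn (fun x => Real.exp (-c * x) * x ^ (k + 1) * |iteratedDeriv k u x|) (Set.Ioi 0))
    (θ : ℝ) (hθ : c < θ) :
    Tendsto (fun x : ℝ => Real.exp (-θ * x) * x ^ n * iteratedDeriv (n - 2) u x)
      (nhdsWithin 0 (Set.Ioi 0)) (nhds 0) ∧
    Tendsto (fun x : ℝ => Real.exp (-θ * x) * x ^ n * iteratedDeriv (n - 2) u x)
      atTop (nhds 0) := by
  obtain ⟨m, rfl⟩ : ∃ m, n = m + 2 := ⟨n - 2, by omega⟩
  have hm2 : m + 2 - 2 = m := by omega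
  rw [hm2]
  set v : ℝ → ℝ := iteratedDeriv m u with hv_def
  set w : ℝ → ℝ := iteratedDeriv (m + 1) u with hw_def
  -- derivatives of iterated derivatives on the open set
  have hderiv : ∀ k, k < m + 2 → ∀ x ∈ Set.Ioi (0:ℝ),
      HasDerivAt (iteratedDeriv k u) (iteratedDeriv (k+1) u x) x := by
    intro k hk x hx
    have heqon : ∀ j, ∀ y ∈ Set.Ioi (0:ℝ),
        iteratedDerivWithin j u (Set.Ioi 0) y = iteratedDeriv j u y := by
      intro j y hy
      rw [iteratedDerivWithin_eq_iteratedFDerivWithin, iteratedDeriv_eq_iteratedFDeriv,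
        iteratedFDerivWithin_of_isOpen j isOpen_Ioi hy]
    have hd : DifferentiableWithinAt ℝ (iteratedDerivWithin k u (Set.Ioi 0)) (Set.Ioi 0) x :=
      hsmooth.differentiableOn_iteratedDerivWithin (by exact_mod_cast hk) (uniqueDiffOn_Ioi 0) x hx
    have hd' : DifferentiableAt ℝ (iteratedDerivWithin k u (Set.Ioi 0)) x :=
      hd.differentiableAt (isOpen_Ioi.mem_nhds hx)
    have heq : iteratedDerivWithin k u (Set.Ioi 0) =ᶠ[nhds x] iteratedDeriv k u :=
      Filter.eventuallyEq_of_mem (isOpen_Ioi.mem_nhds hx) (fun y hy => heqon k y hy)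
    have hd'' : DifferentiableAt ℝ (iteratedDeriv k u) x :=
      (Filter.EventuallyEq.differentiableAt_iff heq).mp hd'
    rw [iteratedDeriv_succ]
    exact hd''.hasDerivAt
  have hV : ∀ x ∈ Set.Ioi (0:ℝ), HasDerivAt v (w x) x := fun x hx =>
    hderiv m (by omega) x hx
  have hv_cont : ContinuousOn v (Set.Ioi 0) := fun x hx =>
    ((hV x hx).differentiableAt.continuousAt).continuousWithinAt
  have hw_cont : ContinuousOn w (Set.Ioi 0) := fun x hx =>
    ((hderiv (m+1) (by omega) x hx).differentiableAt.continuousAt).continuousWithinAt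
  set g : ℝ → ℝ := fun x => Real.exp (-θ * x) * x ^ (m + 2) * v x with hg_def
  set g' : ℝ → ℝ := fun x =>
      (Real.exp (-θ * x) * (-θ) * x ^ (m + 2)
        + Real.exp (-θ * x) * (((m:ℝ) + 2) * x ^ (m + 1))) * v x
      + Real.exp (-θ * x) * x ^ (m + 2) * w x with hg'_def
  have hg : ∀ x ∈ Set.Ioi (0:ℝ), HasDerivAt g (g' x) x := by
    intro x hx
    have h1 : HasDerivAt (fun x : ℝ => -θ * x) (-θ) x := by
      simpa using (hasDerivAt_id x).const_mul (-θ)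
    have hE : HasDerivAt (fun x : ℝ => Real.exp (-θ * x)) (Real.exp (-θ * x) * (-θ)) x := h1.exp
    have hP := hasDerivAt_pow (m + 2) x
    have := (hE.mul hP).mul (hV x hx)
    convert this using 1
    · rfl
    · rfl
    · rfl
    · simp [hg'_def]
  -- integrability of g' on (0, ∞)
  have hkey : ∀ x : ℝ, 0 < x → x * Real.exp (-(θ - c) * x) ≤ 1 / (θ - c) := by
    intro x hx
    have hθc : 0 < θ - c := by linarith
    have h1 : (θ - c) * x ≤ Real.exp ((θ - c) * x) := by
      have := Real.add_one_le_exp ((θ - c) * x)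
      linarith
    have h2 : x * Real.exp (-(θ - c) * x) = x / Real.exp ((θ - c) * x) := by
      rw [neg_mul, Real.exp_neg, div_eq_mul_inv]
    rw [h2, div_le_div_iff₀ (Real.exp_pos _) hθc]
    nlinarith
  -- pointwise bound for |g'|
  set C : ℝ := θ / (θ - c) + ((m:ℝ) + 2) with hC_def
  set bnd : ℝ → ℝ := fun x =>
      C * (Real.exp (-c * x) * x ^ (m + 1) * |v x|)
      + Real.exp (-c * x) * x ^ (m + 2) * |w x| with hbnd_def
  have hθc : (0:ℝ) < θ - c := by linarith
  have hbound : ∀ x ∈ Set.Ioi (0:ℝ), ‖g' x‖ ≤ bnd x := by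
    intro x hx
    have hx0 : (0:ℝ) < x := hx
    have hexpθ : Real.exp (-θ * x) ≤ Real.exp (-c * x) := by
      apply Real.exp_le_exp.2; nlinarith
    have hexpθ' : (0:ℝ) < Real.exp (-θ * x) := Real.exp_pos _
    have hsplit : Real.exp (-θ * x) = Real.exp (-(θ - c) * x) * Real.exp (-c * x) := by
      rw [← Real.exp_add]; ring_nf
    have hxe : x * Real.exp (-(θ - c) * x) ≤ 1 / (θ - c) := hkey x hx0
    have hterm1 : |Real.exp (-θ * x) * (-θ) * x ^ (m + 2)|
        ≤ (θ / (θ - c)) * (Real.exp (-c * x) * x ^ (m + 1)) := by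
      have h1 : |Real.exp (-θ * x) * (-θ) * x ^ (m + 2)|
          = θ * (x * Real.exp (-(θ - c) * x)) * (Real.exp (-c * x) * x ^ (m + 1)) := by
        rw [abs_mul, abs_mul, abs_of_pos hexpθ', abs_of_pos (pow_pos hx0 _), abs_neg,
          abs_of_pos (by linarith : (0:ℝ) < θ), hsplit]
        ring
      rw [h1]
      have h2 : θ * (x * Real.exp (-(θ - c) * x)) ≤ θ * (1 / (θ - c)) :=
        mul_le_mul_of_nonneg_left hxe (by linarith)
      have h3 : (0:ℝ) ≤ Real.exp (-c * x) * x ^ (m + 1) :=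
        mul_nonneg (Real.exp_pos _).le (pow_pos hx0 _).le
      calc θ * (x * Real.exp (-(θ - c) * x)) * (Real.exp (-c * x) * x ^ (m + 1))
          ≤ θ * (1 / (θ - c)) * (Real.exp (-c * x) * x ^ (m + 1)) :=
            mul_le_mul_of_nonneg_right h2 h3
        _ = (θ / (θ - c)) * (Real.exp (-c * x) * x ^ (m + 1)) := by ring
    have hterm2 : |Real.exp (-θ * x) * (((m:ℝ) + 2) * x ^ (m + 1))|
        ≤ ((m:ℝ) + 2) * (Real.exp (-c * x) * x ^ (m + 1)) := by
      rw [abs_mul, abs_of_pos hexpθ', abs_mul, abs_of_nonneg (by positivity : (0:ℝ) ≤ (m:ℝ) + 2),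
        abs_of_pos (pow_pos hx0 _)]
      have : Real.exp (-θ * x) * x ^ (m + 1) ≤ Real.exp (-c * x) * x ^ (m + 1) :=
        mul_le_mul_of_nonneg_right hexpθ (pow_pos hx0 _).le
      nlinarith [pow_pos hx0 (m+1), Real.exp_pos (-θ * x)]
    have hterm3 : |Real.exp (-θ * x) * x ^ (m + 2) * w x|
        ≤ Real.exp (-c * x) * x ^ (m + 2) * |w x| := by
      rw [abs_mul, abs_mul, abs_of_pos hexpθ', abs_of_pos (pow_pos hx0 _)]
      have h := mul_le_mul_of_nonneg_right hexpθ (pow_pos hx0 (m+2)).le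
      nlinarith [abs_nonneg (w x)]
    have habs : ‖g' x‖ = |g' x| := rfl
    rw [habs, hg'_def]
    calc |((Real.exp (-θ * x) * (-θ) * x ^ (m + 2)
            + Real.exp (-θ * x) * (((m:ℝ) + 2) * x ^ (m + 1))) * v x
          + Real.exp (-θ * x) * x ^ (m + 2) * w x)|
        ≤ |(Real.exp (-θ * x) * (-θ) * x ^ (m + 2)
            + Real.exp (-θ * x) * (((m:ℝ) + 2) * x ^ (m + 1))) * v x|
          + |Real.exp (-θ * x) * x ^ (m + 2) * w x| := abs_add_le _ _
      _ ≤ (|Real.exp (-θ * x) * (-θ) * x ^ (m + 2)|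
            + |Real.exp (-θ * x) * (((m:ℝ) + 2) * x ^ (m + 1))|) * |v x|
          + Real.exp (-c * x) * x ^ (m + 2) * |w x| := by
          rw [abs_mul]
          exact add_le_add (mul_le_mul_of_nonneg_right (abs_add_le _ _) (abs_nonneg _)) hterm3
      _ ≤ ((θ / (θ - c)) * (Real.exp (-c * x) * x ^ (m + 1))
            + ((m:ℝ) + 2) * (Real.exp (-c * x) * x ^ (m + 1))) * |v x|
          + Real.exp (-c * x) * x ^ (m + 2) * |w x| := by
          exact add_le_add_left
            (mul_le_mul_of_nonneg_right (add_le_add hterm1 hterm2) (abs_nonneg _)) _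
      _ = bnd x := by rw [hbnd_def]; ring
  have hbnd_int : IntegrableOn bnd (Set.Ioi 0) := by
    have h1 := hint m (by omega)
    have h2 := hint (m+1) (by omega)
    exact (h1.const_mul C).add (by simpa [hw_def, add_assoc] using h2.integrable)
  have hg'_cont : ContinuousOn g' (Set.Ioi 0) := by
    apply ContinuousOn.add
    · exact (Continuous.continuousOn (by fun_prop)).mul hv_cont
    · exact (Continuous.continuousOn (by fun_prop)).mul hw_cont
  have hg'_int : IntegrableOn g' (Set.Ioi 0) := by
    apply Integrable.mono' hbnd_int
      (hg'_cont.aestronglyMeasurable measurableSet_Ioi)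
    exact (ae_restrict_iff' measurableSet_Ioi).2 (ae_of_all _ hbound)
  -- FTC on subintervals of (0, ∞)
  have hFTC : ∀ a b : ℝ, 0 < a → a ≤ b → ∫ t in a..b, g' t = g b - g a := by
    intro a b ha hab
    apply intervalIntegral.integral_eq_sub_of_hasDerivAt
    · intro t ht
      rw [Set.uIcc_of_le hab] at ht
      exact hg t (lt_of_lt_of_le ha ht.1)
    · apply IntegrableOn.intervalIntegrable
      apply hg'_int.mono_set
      rw [Set.uIcc_of_le hab]
      intro t ht
      exact lt_of_lt_of_le ha ht.1
  -- limit at infinity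
  have htop : Tendsto g atTop (nhds (g 1 + ∫ t in Set.Ioi 1, g' t)) := by
    have h1 : Tendsto (fun x : ℝ => ∫ t in (1:ℝ)..x, g' t) atTop
        (nhds (∫ t in Set.Ioi 1, g' t)) :=
      intervalIntegral_tendsto_integral_Ioi 1
        (hg'_int.mono_set (Set.Ioi_subset_Ioi zero_le_one)) tendsto_id
    apply (tendsto_const_nhds.add h1).congr'
    filter_upwards [eventually_ge_atTop (1:ℝ)] with x hx
    rw [hFTC 1 x one_pos hx]; ring
  -- limit at 0+
  have hzero : Tendsto g (nhdsWithin 0 (Set.Ioi 0))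
      (nhds (g 1 + ∫ t in (1:ℝ)..0, g' t)) := by
    have hII : IntervalIntegrable g' volume 0 1 := by
      rw [intervalIntegrable_iff, Set.uIoc_of_le zero_le_one]
      exact hg'_int.mono_set Set.Ioc_subset_Ioi_self
    have hcont : ContinuousWithinAt (fun b => ∫ t in (1:ℝ)..b, g' t) (Set.Icc 0 1) 0 := by
      apply intervalIntegral.continuousWithinAt_primitive (measure_singleton 0)
      simpa using hII
    have hm' : Tendsto (fun b => ∫ t in (1:ℝ)..b, g' t) (nhdsWithin 0 (Set.Ioi 0))
        (nhds (∫ t in (1:ℝ)..(0:ℝ), g' t)) := by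
      rw [← nhdsWithin_Ioc_eq_nhdsGT (zero_lt_one (α := ℝ))]
      exact hcont.mono Set.Ioc_subset_Icc_self
    apply (tendsto_const_nhds.add hm').congr'
    filter_upwards [Ioc_mem_nhdsGT (zero_lt_one (α := ℝ))] with x hx
    have h2 : ∫ t in (1:ℝ)..x, g' t = g x - g 1 := by
      rw [intervalIntegral.integral_symm, hFTC x 1 hx.1 hx.2]; ring
    rw [h2]; ring
  -- integrability of the auxiliary function exp(-θ x) x^(m+1) |v x|
  set F : ℝ → ℝ := fun x => Real.exp (-θ * x) * x ^ (m + 1) * |v x| with hF_def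
  have hF_int : IntegrableOn F (Set.Ioi 0) := by
    apply Integrable.mono' (hint m (by omega))
    · exact (((Continuous.continuousOn (by fun_prop :
        Continuous fun x : ℝ => Real.exp (-θ * x) * x ^ (m + 1))).mul
        hv_cont.abs).aestronglyMeasurable measurableSet_Ioi)
    · rw [ae_restrict_iff' measurableSet_Ioi]
      apply ae_of_all
      intro x hx
      have hx0 : (0:ℝ) < x := hx
      have h1 : (0:ℝ) ≤ Real.exp (-θ * x) * x ^ (m + 1) * |v x| := by positivity
      rw [Real.norm_eq_abs, abs_of_nonneg h1]
      have hexp : Real.exp (-θ * x) ≤ Real.exp (-c * x) := by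
        apply Real.exp_le_exp.2; nlinarith
      have h3 : (0:ℝ) ≤ x ^ (m + 1) * |v x| := by positivity
      calc Real.exp (-θ * x) * x ^ (m + 1) * |v x|
          = Real.exp (-θ * x) * (x ^ (m + 1) * |v x|) := by ring
        _ ≤ Real.exp (-c * x) * (x ^ (m + 1) * |v x|) := mul_le_mul_of_nonneg_right hexp h3
        _ = Real.exp (-c * x) * x ^ (m + 1) * |v x| := by ring
  -- |g x| = x * F x for x > 0
  have hgF : ∀ x : ℝ, 0 < x → |g x| = x * F x := by
    intro x hx0
    rw [hg_def, hF_def]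
    simp only []
    rw [abs_mul, abs_mul, abs_of_pos (Real.exp_pos _), abs_of_pos (pow_pos hx0 _)]
    ring
  -- key comparison: if |g x| is bounded below, F dominates a multiple of x⁻¹
  have hclose : ∀ α : ℝ, α ≠ 0 → ∀ x : ℝ, 0 < x → |α| / 2 ≤ |g x| →
      x⁻¹ ≤ 2 / |α| * F x := by
    intro α hα x hx0 hgx
    have habs : (0:ℝ) < |α| := abs_pos.2 hα
    have h3 : |α| / 2 ≤ x * F x := (hgF x hx0) ▸ hgx
    have hF0 : (0:ℝ) ≤ F x :=
      mul_nonneg (mul_nonneg (Real.exp_pos _).le (pow_nonneg hx0.le _)) (abs_nonneg _)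
    rw [div_mul_eq_mul_div, le_div_iff₀ habs]
    have key : |α| ≤ x * (2 * F x) := by nlinarith
    calc x⁻¹ * |α| ≤ x⁻¹ * (x * (2 * F x)) :=
          mul_le_mul_of_nonneg_left key (inv_nonneg.2 hx0.le)
      _ = 2 * F x := by field_simp
  -- the limit at infinity is zero
  have hα0 : g 1 + ∫ t in Set.Ioi 1, g' t = 0 := by
    by_contra hα
    set α := g 1 + ∫ t in Set.Ioi 1, g' t with hα_def
    have h2 : ∀ᶠ x in atTop, |α| / 2 ≤ |g x| := by
      have h := Metric.tendsto_nhds.mp htop (|α| / 2) (half_pos (abs_pos.2 hα))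
      filter_upwards [h] with x hx
      have hx' : |g x - α| < |α| / 2 := by rw [← Real.dist_eq]; exact hx
      have h4 := abs_sub_abs_le_abs_sub α (g x)
      rw [abs_sub_comm] at h4
      linarith
    obtain ⟨M, hM⟩ := eventually_atTop.mp h2
    set M' := max M 1 with hM'_def
    have hM' : (0:ℝ) < M' := lt_of_lt_of_le one_pos (le_max_right _ _)
    apply not_IntegrableOn_Ioi_inv (a := M')
    have hFM : IntegrableOn (fun x => 2 / |α| * F x) (Set.Ioi M') :=
      (hF_int.mono_set (Set.Ioi_subset_Ioi hM'.le)).const_mul _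
    apply Integrable.mono' hFM measurable_inv.aestronglyMeasurable
    rw [ae_restrict_iff' measurableSet_Ioi]
    apply ae_of_all
    intro x hx
    have hx0 : (0:ℝ) < x := hM'.trans hx
    rw [Real.norm_eq_abs, abs_of_pos (inv_pos.2 hx0)]
    exact hclose α hα x hx0 (hM x (le_trans (le_max_left _ _) (le_of_lt hx)))
  -- the limit at zero is zero
  have hβ0 : g 1 + ∫ t in (1:ℝ)..0, g' t = 0 := by
    by_contra hβ
    set β := g 1 + ∫ t in (1:ℝ)..0, g' t with hβ_def
    have h2 : ∀ᶠ x in nhdsWithin 0 (Set.Ioi 0), |β| / 2 ≤ |g x| := by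
      have h := Metric.tendsto_nhds.mp hzero (|β| / 2) (half_pos (abs_pos.2 hβ))
      filter_upwards [h] with x hx
      have hx' : |g x - β| < |β| / 2 := by rw [← Real.dist_eq]; exact hx
      have h4 := abs_sub_abs_le_abs_sub β (g x)
      rw [abs_sub_comm] at h4
      linarith
    obtain ⟨δ, hδmem, hδsub⟩ := mem_nhdsGT_iff_exists_Ioo_subset.mp h2
    have hδ : (0:ℝ) < δ := hδmem
    have hIoo : IntegrableOn (fun x : ℝ => x⁻¹) (Set.Ioo 0 δ) := by
      have hFM : IntegrableOn (fun x => 2 / |β| * F x) (Set.Ioo 0 δ) :=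
        (hF_int.mono_set (fun x hx => hx.1)).const_mul _
      apply Integrable.mono' hFM measurable_inv.aestronglyMeasurable
      rw [ae_restrict_iff' measurableSet_Ioo]
      apply ae_of_all
      intro x hx
      rw [Real.norm_eq_abs, abs_of_pos (inv_pos.2 hx.1)]
      exact hclose β hβ x hx.1 (hδsub hx)
    have hrpow : IntegrableOn (fun x : ℝ => x ^ (-1:ℝ)) (Set.Ioo 0 δ) := by
      apply hIoo.congr_fun _ measurableSet_Ioo
      intro x hx
      show x⁻¹ = x ^ (-1:ℝ)
      rw [Real.rpow_neg hx.1.le, Real.rpow_one]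
    rw [intervalIntegral.integrableOn_Ioo_rpow_iff hδ] at hrpow
    linarith
  rw [hβ0] at hzero
  rw [hα0] at htop
  exact ⟨hzero, htop⟩
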